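/- Let G be a K5-minor-free bridgeless chordal graph with at least one edge, and assume the cut monoid M_G is normal. Then the element (2, …, 2, 4) of ℤ^E × ℤ (all edge-coordinates equal to 2, last coordinate 4) lies in int(M_G), no element of int(M_G) has last coordinate less than or equal to 3, and consequently if int(M_G) = y + M_G for some y ∈ int(M_G), then int(M_G) = (2, …, 2, 4) + M_G. -/

import Mathlib

/-! Basic definitions for cut monoids of finite simple graphs. -/

open Classical in
/-- The cut vector of a vertex set `A`, as a function on `Sym2 V`:
value `1` on pairs with exactly one element in `A`, and `0` otherwise. -/
noncomputable def cutVec {V : Type} (A : Set V) : Sym2 V → ℤ :=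
  Sym2.lift ⟨fun v w => if ((v ∈ A) ↔ (w ∈ A)) then 0 else 1,
    fun v w => if_congr iff_comm rfl rfl⟩

variable {V : Type}

/-- The generators `(δ_A, 1)` of the cut monoid of `G`. -/
def cutGens (G : SimpleGraph V) : Set ((G.edgeSet → ℤ) × ℤ) :=
  {p | ∃ A : Set V, p = (fun e => cutVec A e.1, 1)}

/-- The cut monoid `M_G` of a graph `G`. -/
def cutMonoid (G : SimpleGraph V) : AddSubmonoid ((G.edgeSet → ℤ) × ℤ) :=
  AddSubmonoid.closure (cutGens G)

/-- The group `gp(M_G)` generated by the cut monoid. -/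
def cutGroup (G : SimpleGraph V) : AddSubgroup ((G.edgeSet → ℤ) × ℤ) :=
  AddSubgroup.closure (cutGens G)

/-- `M_G` is normal: every `x ∈ gp(M_G)` with `n • x ∈ M_G` for some `n ≥ 1` lies in `M_G`. -/
def CutNormal (G : SimpleGraph V) : Prop :=
  ∀ x ∈ cutGroup G, (∃ n : ℕ, 1 ≤ n ∧ n • x ∈ cutMonoid G) → x ∈ cutMonoid G

/-- `M_G` is seminormal: every `x ∈ gp(M_G)` with `2 • x ∈ M_G` and `3 • x ∈ M_G`
lies in `M_G`. -/
def CutSeminormal (G : SimpleGraph V) : Prop :=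
  ∀ x ∈ cutGroup G, 2 • x ∈ cutMonoid G → 3 • x ∈ cutMonoid G → x ∈ cutMonoid G

/-- Generators of the cone of `M_G`: nonnegative real multiples of the `(δ_A, 1)`. -/
noncomputable def cutConeGens (G : SimpleGraph V) : Set ((G.edgeSet → ℝ) × ℝ) :=
  {q | ∃ (c : ℝ) (A : Set V), 0 ≤ c ∧
    q = c • ((fun e => ((cutVec A e.1 : ℤ) : ℝ), (1 : ℝ)))}

/-- The cone `cone(M_G)`: all finite nonnegative real combinations of the `(δ_A, 1)`. -/
noncomputable def cutCone (G : SimpleGraph V) : Set ((G.edgeSet → ℝ) × ℝ) :=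
  (AddSubmonoid.closure (cutConeGens G) : Set ((G.edgeSet → ℝ) × ℝ))

/-- The canonical map from `ℤ^E × ℤ` to `ℝ^E × ℝ`. -/
noncomputable def toRealCut (G : SimpleGraph V) (p : (G.edgeSet → ℤ) × ℤ) :
    (G.edgeSet → ℝ) × ℝ :=
  (fun e => ((p.1 e : ℤ) : ℝ), ((p.2 : ℤ) : ℝ))

/-- `int(M_G)`: elements of `M_G` mapping into the topological interior of `cone(M_G)`. -/
noncomputable def cutInterior (G : SimpleGraph V) : Set ((G.edgeSet → ℤ) × ℤ) :=
  {p | p ∈ cutMonoid G ∧ toRealCut G p ∈ interior (cutCone G)}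

/-- The set of last coordinates `α ∈ ℕ` realized by elements of `int(M_G)`;
its least element is `m(G)`. -/
noncomputable def cutDegrees (G : SimpleGraph V) : Set ℕ :=
  {α | ∃ x : G.edgeSet → ℤ, ((x, (α : ℤ)) : (G.edgeSet → ℤ) × ℤ) ∈ cutInterior G}

/-- `H` is a minor of `G`: branch sets `B u` are nonempty, pairwise disjoint,
induce connected subgraphs, and edges of `H` are witnessed by edges of `G`. -/
def GraphMinor {W V : Type} (H : SimpleGraph W) (G : SimpleGraph V) : Prop :=
  ∃ B : W → Set V,
    (∀ u, (B u).Nonempty) ∧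
    (∀ u v, u ≠ v → Disjoint (B u) (B v)) ∧
    (∀ u, (G.induce (B u)).Connected) ∧
    (∀ u v, H.Adj u v → ∃ a ∈ B u, ∃ b ∈ B v, G.Adj a b)

/-- `G` is `K₅`-minor-free. -/
def K5Free (G : SimpleGraph V) : Prop :=
  ¬ GraphMinor (⊤ : SimpleGraph (Fin 5)) G

/-- `G` is bipartite: vertices split into two parts so every edge joins the parts. -/
def BipartiteG (G : SimpleGraph V) : Prop :=
  ∃ s : Set V, ∀ ⦃v w⦄, G.Adj v w → ((v ∈ s ∧ w ∉ s) ∨ (w ∈ s ∧ v ∉ s))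

/-- `G` has an induced cycle of length `n` (n ≥ 3): an induced-subgraph copy of the
cycle graph of length `n`. -/
def HasInducedCycleLen (G : SimpleGraph V) (n : ℕ) : Prop :=
  3 ≤ n ∧ Nonempty (SimpleGraph.cycleGraph n ↪g G)

/-- `G` contains a triangle. -/
def HasTriangle (G : SimpleGraph V) : Prop :=
  ∃ a b c, G.Adj a b ∧ G.Adj b c ∧ G.Adj a c

/-- `G` is chordal: every induced cycle is a triangle. -/
def ChordalG (G : SimpleGraph V) : Prop :=
  ∀ n, HasInducedCycleLen G n → n = 3

/-- `G` is bridgeless: every edge lies on some cycle. -/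
def BridgelessG (G : SimpleGraph V) : Prop :=
  ∀ e ∈ G.edgeSet, ∃ (v : V) (c : G.Walk v v), c.IsCycle ∧ e ∈ c.edges

/-- `G` is (isomorphic to) a cycle of length `n`. -/
def IsCycleOfLen (G : SimpleGraph V) (n : ℕ) : Prop :=
  3 ≤ n ∧ Nonempty (G ≃g SimpleGraph.cycleGraph n)

/-- `G` is a cycle. -/
def IsCycleGraph (G : SimpleGraph V) : Prop :=
  ∃ n, IsCycleOfLen G n

/-- `G` is a `0`-sum of `G1` and `G2`: copies of `G1`, `G2` cover `G`,
overlap in exactly one vertex, and every edge comes from `G1` or `G2`. -/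
def IsZeroSumDecomp {V1 V2 : Type} (G : SimpleGraph V) (G1 : SimpleGraph V1)
    (G2 : SimpleGraph V2) : Prop :=
  ∃ (f1 : V1 ↪ V) (f2 : V2 ↪ V),
    Set.range f1 ∪ Set.range f2 = Set.univ ∧
    (∃ v, Set.range f1 ∩ Set.range f2 = {v}) ∧
    (∀ a b, G.Adj a b ↔
      ((∃ x y, f1 x = a ∧ f1 y = b ∧ G1.Adj x y) ∨
       (∃ x y, f2 x = a ∧ f2 y = b ∧ G2.Adj x y)))

/-- `G` is a `1`-sum of `G1` and `G2` along a common edge. -/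
def IsOneSumDecomp {V1 V2 : Type} (G : SimpleGraph V) (G1 : SimpleGraph V1)
    (G2 : SimpleGraph V2) : Prop :=
  ∃ (f1 : V1 ↪ V) (f2 : V2 ↪ V) (v w : V),
    v ≠ w ∧
    Set.range f1 ∪ Set.range f2 = Set.univ ∧
    Set.range f1 ∩ Set.range f2 = {v, w} ∧
    (∃ x y, f1 x = v ∧ f1 y = w ∧ G1.Adj x y) ∧
    (∃ x y, f2 x = v ∧ f2 y = w ∧ G2.Adj x y) ∧
    (∀ a b, G.Adj a b ↔
      ((∃ x y, f1 x = a ∧ f1 y = b ∧ G1.Adj x y) ∨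
       (∃ x y, f2 x = a ∧ f2 y = b ∧ G2.Adj x y)))

/-- Ring graphs: obtained, up to adding isolated vertices, from finitely many
(finite) trees and cycles by iterated `0`-sums and `1`-sums. -/
inductive IsRingGraph : {V : Type} → SimpleGraph V → Prop
  | tree {V : Type} (G : SimpleGraph V) :
      Finite V → G.Connected → G.IsAcyclic → IsRingGraph G
  | cycle {V : Type} (G : SimpleGraph V) : IsCycleGraph G → IsRingGraph G
  | zeroSum {V1 V2 V : Type} {G1 : SimpleGraph V1} {G2 : SimpleGraph V2}
      {G : SimpleGraph V} :
      IsRingGraph G1 → IsRingGraph G2 → IsZeroSumDecomp G G1 G2 → IsRingGraph G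
  | oneSum {V1 V2 V : Type} {G1 : SimpleGraph V1} {G2 : SimpleGraph V2}
      {G : SimpleGraph V} :
      IsRingGraph G1 → IsRingGraph G2 → IsOneSumDecomp G G1 G2 → IsRingGraph G
  | addIsolated {V W : Type} {G : SimpleGraph V} {H : SimpleGraph W} (f : V ↪ W) :
      IsRingGraph G → (∀ a b, H.Adj a b ↔ ∃ x y, f x = a ∧ f y = b ∧ G.Adj x y) →
      IsRingGraph H

/-- An edge of an induced subgraph is an edge of the ambient graph. -/
lemma induce_edge_mem (G : SimpleGraph V) (s : Set V) (e : Sym2 s)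
    (he : e ∈ (G.induce s).edgeSet) : e.map Subtype.val ∈ G.edgeSet := by
  induction e using Sym2.ind with
  | _ a b =>
    rw [Sym2.map_pair_eq, SimpleGraph.mem_edgeSet]
    exact he

/-- Restriction of a vector indexed by the edges of `G` to the edges of the
subgraph of `G` induced on `s`. -/
noncomputable def restrictCut (G : SimpleGraph V) (s : Set V) (p : G.edgeSet → ℤ) :
    (G.induce s).edgeSet → ℤ :=
  fun e => p ⟨e.1.map Subtype.val, induce_edge_mem G s e.1 e.2⟩

-- ### new stuff

open Classical

lemma cutVec_mk (A : Set V) (u v : V) :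
    cutVec A s(u, v) = if (u ∈ A ↔ v ∈ A) then 0 else 1 := by
  simp [cutVec]

noncomputable def genZ (G : SimpleGraph V) (A : Set V) : (G.edgeSet → ℤ) × ℤ :=
  (fun e => cutVec A e.1, 1)

noncomputable def genR (G : SimpleGraph V) (A : Set V) : (G.edgeSet → ℝ) × ℝ :=
  (fun e => ((cutVec A e.1 : ℤ) : ℝ), 1)

lemma genZ_mem (G : SimpleGraph V) (A : Set V) : genZ G A ∈ cutGens G := ⟨A, rfl⟩

lemma genZ_mem_monoid (G : SimpleGraph V) (A : Set V) : genZ G A ∈ cutMonoid G :=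
  AddSubmonoid.subset_closure (genZ_mem G A)

lemma genR_mem (G : SimpleGraph V) (A : Set V) : genR G A ∈ cutConeGens G :=
  ⟨1, A, zero_le_one, by simp [genR]⟩

lemma smul_genR_mem (G : SimpleGraph V) {c : ℝ} (hc : 0 ≤ c) (A : Set V) :
    c • genR G A ∈ cutConeGens G := ⟨c, A, hc, rfl⟩

lemma genR_mem_cone (G : SimpleGraph V) (A : Set V) : genR G A ∈ cutCone G :=
  AddSubmonoid.subset_closure (genR_mem G A)

lemma toRealCut_genZ (G : SimpleGraph V) (A : Set V) :
    toRealCut G (genZ G A) = genR G A := by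
  simp [toRealCut, genZ, genR]

/-- Elements of the cut monoid have nonnegative last coordinate, and are zero
if the last coordinate is zero. -/
lemma cutMonoid_snd {G : SimpleGraph V} {p : (G.edgeSet → ℤ) × ℤ}
    (hp : p ∈ cutMonoid G) : 0 ≤ p.2 ∧ (p.2 = 0 → p = 0) := by
  induction hp using AddSubmonoid.closure_induction with
  | mem x hx => obtain ⟨A, rfl⟩ := hx; exact ⟨by norm_num, by norm_num⟩
  | zero => exact ⟨le_refl _, fun _ => rfl⟩
  | add x y hx hy ihx ihy =>
    refine ⟨by have := ihx.1; have := ihy.1; simpa using by omega, fun h => ?_⟩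
    have h2 : x.2 + y.2 = 0 := h
    have hx0 : x.2 = 0 := by have := ihx.1; have := ihy.1; omega
    have hy0 : y.2 = 0 := by have := ihx.1; have := ihy.1; omega
    rw [ihx.2 hx0, ihy.2 hy0, add_zero]

/-- A linear inequality valid on the generators is valid on the cone. -/
lemma cone_nonneg {G : SimpleGraph V} (ψ : ((G.edgeSet → ℝ) × ℝ) →ₗ[ℝ] ℝ)
    (hgen : ∀ A : Set V, 0 ≤ ψ (genR G A)) :
    ∀ q ∈ cutCone G, 0 ≤ ψ q := by
  intro q hq
  induction hq using AddSubmonoid.closure_induction with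
  | mem x hx =>
    obtain ⟨c, A, hc, rfl⟩ := hx
    have h1 : ψ (c • genR G A) = c * ψ (genR G A) := by rw [map_smul]; simp
    rw [show ((fun e : G.edgeSet => ((cutVec A e.1 : ℤ) : ℝ), (1:ℝ))) = genR G A from rfl, h1]
    exact mul_nonneg hc (hgen A)
  | zero => simp
  | add x y hx hy ihx ihy => rw [map_add]; exact add_nonneg ihx ihy

/-- A nonzero linear inequality valid on the cone is strict on the interior. -/
lemma interior_pos {G : SimpleGraph V} (ψ : ((G.edgeSet → ℝ) × ℝ) →ₗ[ℝ] ℝ)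
    (hgen : ∀ A : Set V, 0 ≤ ψ (genR G A))
    (w : (G.edgeSet → ℝ) × ℝ) (hw : 0 < ψ w)
    {q : (G.edgeSet → ℝ) × ℝ} (hq : q ∈ interior (cutCone G)) : 0 < ψ q := by
  have hcont : Continuous (fun t : ℝ => q - t • w) := by continuity
  have h0 : (fun t : ℝ => q - t • w) 0 = q := by simp
  have hnb : (fun t : ℝ => q - t • w) ⁻¹' interior (cutCone G) ∈ nhds (0 : ℝ) := by
    apply hcont.continuousAt.preimage_mem_nhds
    simp only [h0]
    exact (isOpen_interior).mem_nhds hq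
  obtain ⟨ε, hε, hball⟩ := Metric.mem_nhds_iff.1 hnb
  have ht : q - (ε/2) • w ∈ cutCone G := by
    have : (ε/2 : ℝ) ∈ Metric.ball (0:ℝ) ε := by
      simp [Real.ball_eq_Ioo]; constructor <;> nlinarith
    exact interior_subset (hball this)
  have := cone_nonneg ψ hgen _ ht
  rw [map_sub, map_smul] at this
  have hε2 : (0:ℝ) < ε/2 := by linarith
  have : 0 ≤ ψ q - (ε/2) * ψ w := by simpa using this
  nlinarith

lemma cutVec_empty (q : Sym2 V) : cutVec (∅ : Set V) q = 0 := by
  induction q using Sym2.ind with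
  | _ u v => simp [cutVec_mk]

lemma cutVec_triangle (A : Set V) (a b c : V) :
    (cutVec A s(a,b) = 0 ∧ cutVec A s(b,c) = 0 ∧ cutVec A s(a,c) = 0) ∨
    (cutVec A s(a,b) = 1 ∧ cutVec A s(b,c) = 0 ∧ cutVec A s(a,c) = 1) ∨
    (cutVec A s(a,b) = 1 ∧ cutVec A s(b,c) = 1 ∧ cutVec A s(a,c) = 0) ∨
    (cutVec A s(a,b) = 0 ∧ cutVec A s(b,c) = 1 ∧ cutVec A s(a,c) = 1) := by
  by_cases ha : a ∈ A <;> by_cases hb : b ∈ A <;> by_cases hc : c ∈ A <;>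
    simp [cutVec_mk, ha, hb, hc]

/-- Parity: sums of cut vectors have even total over a triangle. -/
lemma cutMonoid_tri_even {G : SimpleGraph V} {a b c : V}
    (hab : G.Adj a b) (hbc : G.Adj b c) (hac : G.Adj a c)
    {p : (G.edgeSet → ℤ) × ℤ} (hp : p ∈ cutMonoid G) :
    Even (p.1 ⟨s(a,b), hab⟩ + p.1 ⟨s(b,c), hbc⟩ + p.1 ⟨s(a,c), hac⟩) := by
  induction hp using AddSubmonoid.closure_induction with
  | mem x hx =>
    obtain ⟨A, rfl⟩ := hx
    rcases cutVec_triangle A a b c with ⟨h1,h2,h3⟩ | ⟨h1,h2,h3⟩ | ⟨h1,h2,h3⟩ | ⟨h1,h2,h3⟩ <;>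
      simp only [h1, h2, h3] <;> decide
  | zero => simp
  | add x y hx hy ihx ihy =>
    have : (x + y).1 ⟨s(a,b), hab⟩ + (x + y).1 ⟨s(b,c), hbc⟩ + (x + y).1 ⟨s(a,c), hac⟩
        = (x.1 ⟨s(a,b), hab⟩ + x.1 ⟨s(b,c), hbc⟩ + x.1 ⟨s(a,c), hac⟩)
        + (y.1 ⟨s(a,b), hab⟩ + y.1 ⟨s(b,c), hbc⟩ + y.1 ⟨s(a,c), hac⟩) := by
      simp [Prod.fst_add]; ring
    rw [this]
    exact ihx.add ihy

/-- The basic linear functionals used for facet inequalities. -/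
noncomputable def triL (G : SimpleGraph V) (c1 c2 c3 d : ℝ) (E1 E2 E3 : G.edgeSet) :
    ((G.edgeSet → ℝ) × ℝ) →ₗ[ℝ] ℝ where
  toFun q := c1 * q.1 E1 + c2 * q.1 E2 + c3 * q.1 E3 + d * q.2
  map_add' a b := by simp [Prod.fst_add, Prod.snd_add]; ring
  map_smul' c a := by simp [Prod.smul_fst, Prod.smul_snd]; ring

lemma triL_apply (G : SimpleGraph V) (c1 c2 c3 d : ℝ) (E1 E2 E3 : G.edgeSet)
    (q : (G.edgeSet → ℝ) × ℝ) :
    triL G c1 c2 c3 d E1 E2 E3 q = c1 * q.1 E1 + c2 * q.1 E2 + c3 * q.1 E3 + d * q.2 := rfl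

section counting
variable [Fintype V]

lemma sum_cutVec_singletons {u v : V} (huv : u ≠ v) :
    ∑ w : V, cutVec ({w} : Set V) s(u,v) = 2 := by
  classical
  have h : ∀ w : V, cutVec ({w} : Set V) s(u,v)
      = (if u = w then 1 else 0) + (if v = w then 1 else 0) := by
    intro w
    by_cases h1 : u = w <;> by_cases h2 : v = w <;>
      simp [cutVec_mk, Set.mem_singleton_iff, h1, h2]
    · exact absurd (h1.trans h2.symm) huv
  rw [Finset.sum_congr rfl (fun w _ => h w), Finset.sum_add_distrib]
  simp [Finset.sum_ite_eq]

lemma sum_cutVec_finsets {u v : V} (huv : u ≠ v) :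
    ∑ F : Finset V, cutVec (↑F : Set V) s(u,v) = 2 ^ (Fintype.card V - 1) := by
  classical
  set g : Finset V → ℤ := fun F => cutVec (↑F : Set V) s(u,v) with hg
  set σ : Finset V → Finset V := fun F => if u ∈ F then F.erase u else insert u F with hσ
  have hσinv : Function.Involutive σ := by
    intro F
    by_cases h : u ∈ F
    · simp [hσ, h, Finset.mem_erase, Finset.insert_erase h]
    · simp [hσ, h, Finset.mem_insert, Finset.erase_insert h]
  have hval : ∀ F, g F + g (σ F) = 1 := by
    intro F
    by_cases hu : u ∈ F <;> by_cases hv : v ∈ F <;>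
      simp [hg, hσ, cutVec_mk, hu, hv, Finset.mem_coe, Finset.mem_erase, Finset.mem_insert,
        huv, Ne.symm huv]
  have hbij : ∑ F : Finset V, g (σ F) = ∑ F : Finset V, g F :=
    Function.Bijective.sum_comp hσinv.bijective g
  have h2 : 2 * ∑ F : Finset V, g F = ∑ F : Finset V, (1 : ℤ) := by
    rw [← Finset.sum_congr rfl (fun F _ => hval F), Finset.sum_add_distrib, hbij]
    ring
  have hcardV : 1 ≤ Fintype.card V := by
    have : Nonempty V := ⟨u⟩
    exact Fintype.card_pos
  have hcard : ∑ F : Finset V, (1 : ℤ) = 2 ^ Fintype.card V := by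
    rw [Finset.sum_const, Finset.card_univ, Fintype.card_finset]
    simp
  rw [hcard] at h2
  have : (2:ℤ) ^ Fintype.card V = 2 * 2 ^ (Fintype.card V - 1) := by
    conv_lhs => rw [show Fintype.card V = (Fintype.card V - 1) + 1 by omega]
    rw [pow_succ]; ring
  rw [this] at h2
  exact mul_left_cancel₀ (by norm_num) h2

lemma sum_gen_singletons (G : SimpleGraph V) :
    ∑ w : V, genZ G ({w} : Set V) = (fun _ => 2, (Fintype.card V : ℤ)) := by
  apply Prod.ext
  · rw [Prod.fst_sum]
    funext e
    rw [Finset.sum_apply]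
    obtain ⟨q, hq⟩ := e
    induction q using Sym2.ind with
    | _ u v =>
      exact sum_cutVec_singletons (G.ne_of_adj hq)
  · rw [Prod.snd_sum]
    simp [genZ]

lemma sum_gen_finsets (G : SimpleGraph V) :
    ∑ F : Finset V, genZ G (↑F : Set V)
      = (fun _ => 2 ^ (Fintype.card V - 1), (2 ^ Fintype.card V : ℤ)) := by
  classical
  apply Prod.ext
  · rw [Prod.fst_sum]
    funext e
    rw [Finset.sum_apply]
    obtain ⟨q, hq⟩ := e
    induction q using Sym2.ind with
    | _ u v =>
      exact sum_cutVec_finsets (G.ne_of_adj hq)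
  · rw [Prod.snd_sum]
    simp [genZ, Fintype.card_finset]

lemma two_le_card_of_edge {G : SimpleGraph V} (hedge : G.edgeSet.Nonempty) :
    2 ≤ Fintype.card V := by
  obtain ⟨q, hq⟩ := hedge
  induction q using Sym2.ind with
  | _ u v =>
    have huv : u ≠ v := G.ne_of_adj hq
    exact Fintype.one_lt_card_iff_nontrivial.2 ⟨⟨u, v, huv⟩⟩

lemma xhat_mem_group (G : SimpleGraph V) :
    (((fun _ => 2, 4) : (G.edgeSet → ℤ) × ℤ)) ∈ cutGroup G := by
  have h1 : ∀ A : Set V, genZ G A ∈ cutGroup G :=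
    fun A => AddSubgroup.subset_closure (genZ_mem G A)
  have hs : (∑ w : V, genZ G ({w} : Set V)) ∈ cutGroup G :=
    AddSubgroup.sum_mem _ (fun w _ => h1 _)
  have hz : ((4 : ℤ) - Fintype.card V) • genZ G (∅ : Set V) ∈ cutGroup G :=
    AddSubgroup.zsmul_mem _ (h1 _) _
  have hmem := AddSubgroup.add_mem _ hs hz
  have heq : (((fun _ => 2, 4) : (G.edgeSet → ℤ) × ℤ))
      = (∑ w : V, genZ G ({w} : Set V)) + ((4 : ℤ) - Fintype.card V) • genZ G (∅ : Set V) := by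
    rw [sum_gen_singletons]
    apply Prod.ext
    · funext e
      simp [genZ, cutVec_empty]
    · simp [genZ]
  rw [heq]; exact hmem

lemma xhat_mem_monoid (G : SimpleGraph V) (hedge : G.edgeSet.Nonempty)
    (hnorm : CutNormal G) :
    (((fun _ => 2, 4) : (G.edgeSet → ℤ) × ℤ)) ∈ cutMonoid G := by
  classical
  have hcard : 2 ≤ Fintype.card V := two_le_card_of_edge hedge
  apply hnorm _ (xhat_mem_group G)
  refine ⟨2 ^ (Fintype.card V - 2), Nat.one_le_two_pow, ?_⟩
  have heq : (2 ^ (Fintype.card V - 2) : ℕ) • (((fun _ => 2, 4) : (G.edgeSet → ℤ) × ℤ))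
      = ∑ F : Finset V, genZ G (↑F : Set V) := by
    rw [sum_gen_finsets]
    apply Prod.ext
    · funext e
      show (2 ^ (Fintype.card V - 2) : ℕ) • (2 : ℤ) = 2 ^ (Fintype.card V - 1)
      rw [nsmul_eq_mul]
      push_cast
      conv_rhs => rw [show Fintype.card V - 1 = (Fintype.card V - 2) + 1 by omega]
      rw [pow_succ]
    · show (2 ^ (Fintype.card V - 2) : ℕ) • (4 : ℤ) = 2 ^ Fintype.card V
      rw [nsmul_eq_mul]
      push_cast
      conv_rhs => rw [show Fintype.card V = (Fintype.card V - 2) + 2 by omega]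
      rw [pow_add]; norm_num
  rw [heq]
  exact AddSubmonoid.sum_mem _ (fun F _ => genZ_mem_monoid G _)

end counting

lemma genR_empty (G : SimpleGraph V) : genR G (∅ : Set V) = (0, 1) := by
  apply Prod.ext
  · funext e; simp [genR, cutVec_empty]
  · rfl

lemma cutVec_pair_formula {u v x y : V} (huv : u ≠ v) (hxy : x ≠ y) :
    ((cutVec {u} s(x,y) : ℝ) + cutVec {v} s(x,y) - cutVec ({u,v} : Set V) s(x,y))
      = if s(x,y) = s(u,v) then 2 else 0 := by
  simp only [cutVec_mk, Sym2.eq_iff, Set.mem_singleton_iff, Set.mem_insert_iff]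
  by_cases h1 : x = u <;> by_cases h2 : x = v <;> by_cases h3 : y = u <;> by_cases h4 : y = v <;>
    simp [h1, h2, h3, h4, hxy, huv] <;>
    simp_all <;> norm_num

section interiorpart
variable [Fintype V]

instance finite_edgeSet (G : SimpleGraph V) : Finite G.edgeSet := by
  have h1 : Finite (Sym2 V) := by
    refine Finite.of_surjective (fun p : V × V => s(p.1, p.2)) ?_
    intro q
    induction q using Sym2.ind with
    | _ u v => exact ⟨(u, v), rfl⟩
  exact Subtype.finite

/-- The big linear map sending coefficients to combinations of cut generators. -/
noncomputable def bigL (G : SimpleGraph V) : (Finset V → ℝ) →ₗ[ℝ] ((G.edgeSet → ℝ) × ℝ) where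
  toFun c := ∑ F : Finset V, c F • genR G (↑F : Set V)
  map_add' a b := by simp [add_smul, Finset.sum_add_distrib]
  map_smul' r a := by simp [Finset.smul_sum, smul_smul]

lemma single_mem_span (G : SimpleGraph V) (e : G.edgeSet) :
    ((Pi.single e (1:ℝ) : G.edgeSet → ℝ), (0:ℝ))
      ∈ Submodule.span ℝ (Set.range (fun F : Finset V => genR G (↑F : Set V))) := by
  classical
  obtain ⟨q, hq⟩ := e
  induction q using Sym2.ind with
  | _ u v =>
    have huv : u ≠ v := G.ne_of_adj hq
    have hmem : ∀ F : Finset V, genR G (↑F : Set V)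
        ∈ Submodule.span ℝ (Set.range (fun F : Finset V => genR G (↑F : Set V))) :=
      fun F => Submodule.subset_span ⟨F, rfl⟩
    have key : ((Pi.single (⟨s(u,v), hq⟩ : G.edgeSet) (1:ℝ) : G.edgeSet → ℝ), (0:ℝ))
        = (1/2 : ℝ) • (genR G (↑({u} : Finset V) : Set V) + genR G (↑({v} : Finset V) : Set V)
            - genR G (↑({u, v} : Finset V) : Set V) - genR G (↑(∅ : Finset V) : Set V)) := by
      apply Prod.ext
      · funext e'
        obtain ⟨q', hq'⟩ := e'
        induction q' using Sym2.ind with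
        | _ x y =>
          have hxy : x ≠ y := G.ne_of_adj hq'
          have hpair := cutVec_pair_formula huv hxy
          simp only [Prod.smul_fst, Prod.fst_sub, Prod.fst_add, Pi.smul_apply, Pi.sub_apply,
            Pi.add_apply, genR, Finset.coe_singleton, Finset.coe_insert, Finset.coe_empty,
            cutVec_empty]
          rw [Pi.single_apply]
          simp only [Subtype.mk.injEq]
          rw [show ((insert u {v} : Set V)) = ({u, v} : Set V) by rfl]
          by_cases hcase : s(x,y) = s(u,v) <;>
            simp only [hcase, if_true, if_false, Int.cast_zero] at hpair ⊢ <;>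
            (try simp only [if_neg hcase] at hpair ⊢) <;>
            simp only [smul_eq_mul] <;> linarith
      · simp [genR]
    rw [key]
    exact Submodule.smul_mem _ _ (Submodule.sub_mem _ (Submodule.sub_mem _
      (Submodule.add_mem _ (hmem _) (hmem _)) (hmem _)) (hmem _))

lemma pair_mem_span (G : SimpleGraph V) (x : G.edgeSet → ℝ) (α : ℝ) :
    ((x, α) : (G.edgeSet → ℝ) × ℝ)
      ∈ Submodule.span ℝ (Set.range (fun F : Finset V => genR G (↑F : Set V))) := by
  classical
  haveI : Fintype G.edgeSet := Fintype.ofFinite _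
  have hzero : ((0 : G.edgeSet → ℝ), (1:ℝ))
      ∈ Submodule.span ℝ (Set.range (fun F : Finset V => genR G (↑F : Set V))) := by
    have : genR G (↑(∅ : Finset V) : Set V) = ((0 : G.edgeSet → ℝ), (1:ℝ)) := by
      rw [Finset.coe_empty, genR_empty]
    rw [← this]
    exact Submodule.subset_span ⟨∅, rfl⟩
  have hrepr : ((x, α) : (G.edgeSet → ℝ) × ℝ)
      = (∑ e : G.edgeSet, x e • ((Pi.single e (1:ℝ) : G.edgeSet → ℝ), (0:ℝ)))
        + α • ((0 : G.edgeSet → ℝ), (1:ℝ)) := by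
    apply Prod.ext
    · rw [Prod.fst_add, Prod.fst_sum]
      funext j
      rw [Pi.add_apply, Finset.sum_apply]
      simp only [Prod.smul_fst, Pi.smul_apply, Pi.single_apply, smul_eq_mul, mul_ite,
        mul_one, mul_zero, Prod.smul_snd]
      simp [Finset.sum_ite_eq]
    · rw [Prod.snd_add, Prod.snd_sum]
      simp
  rw [hrepr]
  exact Submodule.add_mem _
    (Submodule.sum_mem _ (fun e _ => Submodule.smul_mem _ _ (single_mem_span G e)))
    (Submodule.smul_mem _ _ hzero)

lemma bigL_surjective (G : SimpleGraph V) : LinearMap.range (bigL G) = ⊤ := by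
  classical
  rw [eq_top_iff]
  have hgen : ∀ F : Finset V, genR G (↑F : Set V) ∈ LinearMap.range (bigL G) := by
    intro F
    refine ⟨Pi.single F 1, ?_⟩
    have hshow : bigL G (Pi.single F (1:ℝ)) 
        = ∑ F' : Finset V, (Pi.single F (1:ℝ) : Finset V → ℝ) F' • genR G (↑F' : Set V) := rfl
    rw [hshow, Finset.sum_eq_single_of_mem F (Finset.mem_univ F)]
    · simp
    · intro F' _ hne
      rw [Pi.single_apply]
      simp [hne]
  intro w _
  have hw : w ∈ Submodule.span ℝ (Set.range (fun F : Finset V => genR G (↑F : Set V))) := by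
    obtain ⟨x, α⟩ := w
    exact pair_mem_span G x α
  refine Submodule.span_le.2 ?_ hw
  rintro _ ⟨F, rfl⟩
  exact hgen F

/-- Real version of the all-subsets sum. -/
lemma sum_genR_finsets (G : SimpleGraph V) :
    ∑ F : Finset V, genR G (↑F : Set V)
      = (fun _ => (2 ^ (Fintype.card V - 1) : ℝ), (2 ^ Fintype.card V : ℝ)) := by
  classical
  apply Prod.ext
  · rw [Prod.fst_sum]
    funext e
    rw [Finset.sum_apply]
    obtain ⟨q, hq⟩ := e
    induction q using Sym2.ind with
    | _ u v =>
      have : ∑ F : Finset V, ((cutVec (↑F : Set V) s(u,v) : ℤ) : ℝ)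
          = ((∑ F : Finset V, cutVec (↑F : Set V) s(u,v) : ℤ) : ℝ) := by
        push_cast; rfl
      show ∑ F : Finset V, ((cutVec (↑F : Set V) s(u,v) : ℤ) : ℝ) = _
      rw [this, sum_cutVec_finsets (G.ne_of_adj hq)]
      push_cast
      rfl
  · rw [Prod.snd_sum]
    simp [genR, Fintype.card_finset]

lemma phat_mem_interior (G : SimpleGraph V) (hedge : G.edgeSet.Nonempty) :
    toRealCut G (((fun _ => 2, 4) : (G.edgeSet → ℤ) × ℤ)) ∈ interior (cutCone G) := by
  classical
  haveI : Fintype G.edgeSet := Fintype.ofFinite _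
  have hcard : 2 ≤ Fintype.card V := two_le_card_of_edge hedge
  set n := Fintype.card V with hn
  set c : ℝ := 4 / 2 ^ n with hc
  have hcpos : 0 < c := by positivity
  set p : (G.edgeSet → ℝ) × ℝ := toRealCut G (((fun _ => 2, 4) : (G.edgeSet → ℤ) × ℤ)) with hp
  have hprep : bigL G (fun _ => c) = p := by
    show (∑ F : Finset V, c • genR G (↑F : Set V)) = p
    rw [← Finset.smul_sum, sum_genR_finsets]
    apply Prod.ext
    · funext e
      show c • (2 ^ (n - 1) : ℝ) = ((2 : ℤ) : ℝ)
      rw [smul_eq_mul, hc]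
      rw [show n = (n-1) + 1 by omega]
      rw [pow_succ]
      have h1 : (2:ℝ) ^ (n-1) ≠ 0 := by positivity
      field_simp
      ring_nf
      rw [show 1 + (n - 1) - 1 = n - 1 by omega]
    · show c • (2 ^ n : ℝ) = ((4 : ℤ) : ℝ)
      rw [smul_eq_mul, hc]
      have h1 : (2:ℝ) ^ n ≠ 0 := by positivity
      field_simp
      norm_num
  obtain ⟨ρ, hρ⟩ := (bigL G).exists_rightInverse_of_surjective (bigL_surjective G)
  have hρap : ∀ w, bigL G (ρ w) = w := by
    intro w
    have := LinearMap.congr_fun hρ w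
    simpa using this
  have hρcont : Continuous ρ := ρ.continuous_of_finiteDimensional
  set U : Set ((G.edgeSet → ℝ) × ℝ) := {w | ∀ F : Finset V, |ρ (w - p) F| < c} with hU
  have hUopen : IsOpen U := by
    have : U = (fun w => ρ (w - p)) ⁻¹' (Set.univ.pi (fun _ : Finset V => Metric.ball (0:ℝ) c)) := by
      ext w
      simp [hU, Set.mem_pi, Real.dist_eq]
    rw [this]
    apply IsOpen.preimage
    · exact hρcont.comp (continuous_id.sub continuous_const)
    · exact isOpen_set_pi Set.finite_univ (fun _ _ => Metric.isOpen_ball)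
  have hpU : p ∈ U := by
    intro F
    simp [map_zero ρ]
    exact hcpos
  have hUsub : U ⊆ cutCone G := by
    intro w hw
    have hw2 : w = bigL G (fun F => c + ρ (w - p) F) := by
      have h1 : (fun F => c + ρ (w - p) F) = (fun _ : Finset V => c) + ρ (w - p) := rfl
      rw [h1, map_add, hprep, hρap]
      abel
    rw [hw2]
    show (∑ F : Finset V, (c + ρ (w - p) F) • genR G (↑F : Set V)) ∈ cutCone G
    apply AddSubmonoid.sum_mem
    intro F _
    apply AddSubmonoid.subset_closure
    apply smul_genR_mem
    have := hw F
    have habs := abs_lt.1 this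
    linarith [habs.1]
  exact interior_maximal hUsub hUopen hpU

end interiorpart

section triangle

/-- Fin subtraction characterization. -/
lemma fin_sub_val_one {n : ℕ} (hn : 2 ≤ n) (u v : Fin n) :
    (v - u).val = 1 ↔ (v.val = u.val + 1 ∨ (u.val = n - 1 ∧ v.val = 0)) := by
  have h1 : (((v - u : Fin n).val : ℤ)) = ((v.val : ℤ) - u.val) % n :=
    Fin.coe_int_sub_eq_mod v u
  have hu := u.is_lt; have hv := v.is_lt
  constructor
  · intro h
    have h2 : ((v.val:ℤ) - u.val) % n = 1 := by rw [← h1, h]; norm_num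
    obtain ⟨k, hk⟩ := Int.dvd_self_sub_of_emod_eq h2
    have hn' : (0:ℤ) < n := by omega
    have hk1 : k ≤ 0 := by nlinarith
    have hk2 : -1 ≤ k := by nlinarith
    have : k = 0 ∨ k = -1 := by omega
    rcases this with rfl | rfl <;> omega
  · intro h
    have h2 : ((v.val:ℤ) - u.val) % n = 1 := by
      rcases h with h | ⟨ha, hb⟩
      · have heq : (v.val:ℤ) - u.val = 1 := by omega
        rw [heq, Int.emod_eq_of_lt] <;> omega
      · have heq : (v.val:ℤ) - u.val = 1 - n := by omega
        rw [heq, Int.sub_emod, Int.emod_self, sub_zero, Int.emod_emod_of_dvd _ dvd_rfl,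
          Int.emod_eq_of_lt] <;> omega
    rw [h2] at h1
    omega

variable {G : SimpleGraph V}

/-- Walk support as a list of `getVert`s. -/
lemma walk_support_eq_map {u w : V} (p : G.Walk u w) :
    p.support = (List.range (p.length + 1)).map p.getVert := by
  induction p with
  | nil =>
    simp [List.range_succ, SimpleGraph.Walk.getVert_zero]
  | @cons a b c h q ih =>
    rw [SimpleGraph.Walk.support_cons, SimpleGraph.Walk.length_cons, ih]
    conv_rhs => rw [List.range_succ_eq_map]
    rw [List.map_cons, List.map_map]
    have hfun : ((SimpleGraph.Walk.cons h q).getVert ∘ Nat.succ) = q.getVert := by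
      funext k
      exact SimpleGraph.Walk.getVert_cons_succ q h
    rw [hfun, SimpleGraph.Walk.getVert_zero]

/-- `getVert` is injective on `[0, length-1]` for a cycle. -/
lemma cycle_getVert_injOn {v : V} {c : G.Walk v v} (hc : c.IsCycle) :
    ∀ a b : ℕ, a ≤ c.length - 1 → b ≤ c.length - 1 → c.getVert a = c.getVert b → a = b := by
  have hlen3 := hc.three_le_length
  have hsup := walk_support_eq_map c
  have htail : c.support.tail = (List.range c.length).map (fun k => c.getVert (k + 1)) := by
    rw [hsup, List.range_succ_eq_map]
    simp only [List.map_cons, List.tail_cons, List.map_map]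
    rfl
  have hnodup : c.support.tail.Nodup := hc.support_nodup
  rw [htail] at hnodup
  have hinj : ∀ x ∈ List.range c.length, ∀ y ∈ List.range c.length,
      c.getVert (x + 1) = c.getVert (y + 1) → x = y := List.inj_on_of_nodup_map hnodup
  intro a b ha hb hab
  rcases Nat.eq_zero_or_pos a with ha0 | hapos <;> rcases Nat.eq_zero_or_pos b with hb0 | hbpos
  · omega
  · subst ha0
    exfalso
    have h0 : c.getVert 0 = c.getVert c.length := by
      rw [SimpleGraph.Walk.getVert_zero, SimpleGraph.Walk.getVert_length]
    have := hinj (c.length - 1) (by rw [List.mem_range]; omega) (b - 1)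
      (by rw [List.mem_range]; omega) (by
        rw [show c.length - 1 + 1 = c.length by omega, show b - 1 + 1 = b by omega, ← h0]
        exact hab)
    omega
  · subst hb0
    exfalso
    have h0 : c.getVert 0 = c.getVert c.length := by
      rw [SimpleGraph.Walk.getVert_zero, SimpleGraph.Walk.getVert_length]
    have := hinj (a - 1) (by rw [List.mem_range]; omega) (c.length - 1)
      (by rw [List.mem_range]; omega) (by
        rw [show c.length - 1 + 1 = c.length by omega, show a - 1 + 1 = a by omega, ← h0]
        exact hab)
    omega
  · have := hinj (a - 1) (by rw [List.mem_range]; omega) (b - 1)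
      (by rw [List.mem_range]; omega) (by
        rw [show a - 1 + 1 = a by omega, show b - 1 + 1 = b by omega]; exact hab)
    omega

/-- The segment of a closed walk from position `i` to position `i + d`. -/
noncomputable def seg {v : V} (c : G.Walk v v) :
    (d i : ℕ) → i + d ≤ c.length → G.Walk (c.getVert i) (c.getVert (i + d))
  | 0, i, _ => SimpleGraph.Walk.nil
  | d+1, i, h =>
      SimpleGraph.Walk.cons (c.adj_getVert_succ (by omega))
        ((seg c d (i+1) (by omega)).copy rfl (congrArg c.getVert (by omega)))

lemma seg_length {v : V} (c : G.Walk v v) (d i : ℕ) (h : i + d ≤ c.length) :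
    (seg c d i h).length = d := by
  induction d generalizing i with
  | zero => rfl
  | succ d ih =>
    show (SimpleGraph.Walk.cons _ _).length = d + 1
    rw [SimpleGraph.Walk.length_cons, SimpleGraph.Walk.length_copy, ih]

lemma seg_support {v : V} (c : G.Walk v v) (d i : ℕ) (h : i + d ≤ c.length) :
    (seg c d i h).support = (List.range (d+1)).map (fun k => c.getVert (i + k)) := by
  induction d generalizing i with
  | zero =>
    show SimpleGraph.Walk.nil.support = _
    simp [List.range_succ]
  | succ d ih =>
    show (SimpleGraph.Walk.cons _ _).support = _
    rw [SimpleGraph.Walk.support_cons, SimpleGraph.Walk.support_copy, ih]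
    conv_rhs => rw [List.range_succ_eq_map]
    rw [List.map_cons, List.map_map]
    have hfun : ((fun k => c.getVert (i + k)) ∘ Nat.succ) = (fun k => c.getVert (i + 1 + k)) := by
      funext k
      show c.getVert (i + (k+1)) = c.getVert (i + 1 + k)
      congr 1
      omega
    rw [hfun]
    simp

lemma seg_edges {v : V} (c : G.Walk v v) (d i : ℕ) (h : i + d ≤ c.length) :
    (seg c d i h).edges = (List.range d).map (fun k => s(c.getVert (i+k), c.getVert (i+k+1))) := by
  induction d generalizing i with
  | zero => rfl
  | succ d ih =>
    show (SimpleGraph.Walk.cons _ _).edges = _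
    rw [SimpleGraph.Walk.edges_cons, SimpleGraph.Walk.edges_copy, ih]
    conv_rhs => rw [List.range_succ_eq_map]
    rw [List.map_cons, List.map_map]
    have hfun : ((fun k => s(c.getVert (i+k), c.getVert (i+k+1))) ∘ Nat.succ)
        = (fun k => s(c.getVert (i+1+k), c.getVert (i+1+k+1))) := by
      funext k
      show s(c.getVert (i + (k+1)), c.getVert (i + (k+1) + 1)) = _
      rw [show i + (k+1) = i + 1 + k by omega]
    rw [hfun]
    simp

/-- A chord yields a shorter cycle. -/
lemma shorter_cycle {v : V} {c : G.Walk v v} (hc : c.IsCycle) {i d : ℕ}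
    (hd2 : 2 ≤ d) (hid : i + d ≤ c.length - 1)
    (hadj : G.Adj (c.getVert (i+d)) (c.getVert i)) :
    ∃ (u : V) (w : G.Walk u u), w.IsCycle ∧ w.length = d + 1 := by
  have hlen3 := hc.three_le_length
  have hinj := cycle_getVert_injOn hc
  have hle : i + d ≤ c.length := by omega
  refine ⟨c.getVert (i+d), SimpleGraph.Walk.cons hadj (seg c d i hle), ?_, ?_⟩
  · rw [SimpleGraph.Walk.cons_isCycle_iff]
    constructor
    · rw [SimpleGraph.Walk.isPath_def, seg_support]
      apply List.Nodup.map_on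
      · intro x hx y hy hxy
        rw [List.mem_range] at hx hy
        have := hinj (i + x) (i + y) (by omega) (by omega) hxy
        omega
      · exact List.nodup_range
    · rw [seg_edges]
      intro hmem
      rw [List.mem_map] at hmem
      obtain ⟨k, hk, heq⟩ := hmem
      rw [List.mem_range] at hk
      rw [Sym2.eq_iff] at heq
      rcases heq with ⟨h1, h2⟩ | ⟨h1, h2⟩
      · have := hinj (i + k) (i + d) (by omega) (by omega) h1
        omega
      · have e1 := hinj (i + k + 1) (i + d) (by omega) (by omega) h2
        have e2 := hinj (i + k) i (by omega) (by omega) h1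
        omega
  · rw [SimpleGraph.Walk.length_cons, seg_length]

end triangle

section triangle2
variable {G : SimpleGraph V}

lemma exists_triangle (hcyc : ∃ (u : V) (w : G.Walk u u), w.IsCycle)
    (hch : ChordalG G) : HasTriangle G := by
  classical
  set S : Set ℕ := {m | ∃ (u : V) (w : G.Walk u u), w.IsCycle ∧ w.length = m} with hS
  have hSne : S.Nonempty := by
    obtain ⟨u, w, hw⟩ := hcyc
    exact ⟨w.length, u, w, hw, rfl⟩
  obtain ⟨v, c, hc, hclen⟩ := Nat.sInf_mem hSne
  set n := sInf S with hn
  have hmin : ∀ m ∈ S, n ≤ m := fun m hm => Nat.sInf_le hm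
  have h3 : 3 ≤ n := by rw [← hclen]; exact hc.three_le_length
  have hinj : ∀ a b : ℕ, a ≤ n - 1 → b ≤ n - 1 → c.getVert a = c.getVert b → a = b := by
    have := cycle_getVert_injOn hc
    rw [hclen] at this
    exact this
  by_cases hn3 : n = 3
  · refine ⟨c.getVert 0, c.getVert 1, c.getVert 2, ?_, ?_, ?_⟩
    · exact c.adj_getVert_succ (by omega)
    · exact c.adj_getVert_succ (by omega)
    · have h23 : G.Adj (c.getVert 2) (c.getVert 3) := c.adj_getVert_succ (by omega)
      have h30 : c.getVert 3 = c.getVert 0 := by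
        rw [SimpleGraph.Walk.getVert_zero, show (3:ℕ) = c.length by omega,
          SimpleGraph.Walk.getVert_length]
      rw [h30] at h23
      exact h23.symm
  · -- length at least 4: build an induced cycle embedding, contradicting chordality
    exfalso
    have hn4 : 4 ≤ n := by omega
    -- the backward (no-chord) fact
    have hback : ∀ a b : ℕ, a < b → b ≤ n - 1 → G.Adj (c.getVert a) (c.getVert b) →
        b - a = 1 ∨ (a = 0 ∧ b = n - 1) := by
      intro a b hab hb hadj
      by_contra hcon
      push_neg at hcon
      obtain ⟨hcon1, hcon2⟩ := hcon
      set d := b - a with hd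
      have hd2 : 2 ≤ d := by omega
      have hdn : d ≤ n - 2 := by
        rcases Nat.eq_or_lt_of_le hb with hb' | hb'
        · have : a ≠ 0 := by
            intro h0
            exact hcon2 h0 (by omega)
          omega
        · omega
      have hadj' : G.Adj (c.getVert (a + d)) (c.getVert a) := by
        rw [show a + d = b by omega]
        exact hadj.symm
      obtain ⟨u, w, hw, hwlen⟩ := shorter_cycle hc hd2 (by omega) hadj'
      have := hmin (d + 1) ⟨u, w, hw, hwlen⟩
      omega
    -- the embedding
    have hemb : Nonempty (SimpleGraph.cycleGraph n ↪g G) := by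
      refine ⟨⟨⟨fun i => c.getVert i.val, ?_⟩, ?_⟩⟩
      · intro i j hij
        exact Fin.ext (hinj i.val j.val (by omega) (by omega) hij)
      · intro i j
        show G.Adj (c.getVert i.val) (c.getVert j.val) ↔ _
        rw [SimpleGraph.cycleGraph_adj']
        have hwrap : G.Adj (c.getVert (n-1)) (c.getVert 0) := by
          have h1 : G.Adj (c.getVert (n-1)) (c.getVert (n - 1 + 1)) :=
            c.adj_getVert_succ (by omega)
          rw [show n - 1 + 1 = n by omega] at h1
          have h2 : c.getVert n = c.getVert 0 := by
            rw [SimpleGraph.Walk.getVert_zero, ← hclen, SimpleGraph.Walk.getVert_length]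
          rwa [h2] at h1
        have hfwd : ∀ a : ℕ, a + 1 ≤ n - 1 → G.Adj (c.getVert a) (c.getVert (a + 1)) := by
          intro a ha
          exact c.adj_getVert_succ (by omega)
        constructor
        · intro hadj
          have hne : i.val ≠ j.val := by
            intro h
            rw [show i.val = j.val from h] at hadj
            exact G.loopless.irrefl _ hadj
          rcases Nat.lt_or_ge i.val j.val with hlt | hge
          · rcases hback i.val j.val hlt (by omega) hadj with h1 | ⟨h0, hn1⟩
            · right
              rw [fin_sub_val_one (by omega)]
              left; omega
            · left
              rw [fin_sub_val_one (by omega)]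
              right
              constructor <;> omega
          · have hlt : j.val < i.val := by omega
            rcases hback j.val i.val hlt (by omega) hadj.symm with h1 | ⟨h0, hn1⟩
            · left
              rw [fin_sub_val_one (by omega)]
              left; omega
            · right
              rw [fin_sub_val_one (by omega)]
              right
              constructor <;> omega
        · intro hcy
          rcases hcy with h1 | h1 <;> rw [fin_sub_val_one (by omega)] at h1
          · -- (i - j).val = 1 : i = j + 1 or wrap
            rcases h1 with h1 | ⟨h1, h2⟩
            · rw [show i.val = j.val + 1 from h1]
              exact (hfwd j.val (by omega)).symm
            · rw [show i.val = 0 from h2, show j.val = n - 1 from h1]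
              exact hwrap.symm
          · rcases h1 with h1 | ⟨h1, h2⟩
            · rw [show j.val = i.val + 1 from h1]
              exact hfwd i.val (by omega)
            · rw [show j.val = 0 from h2, show i.val = n - 1 from h1]
              exact hwrap
    exact hn3 (hch n ⟨h3, hemb⟩)

end triangle2

section bullet2

lemma cutVec_single_left {x y : V} (h : x ≠ y) : cutVec ({x} : Set V) s(x,y) = 1 := by
  rw [cutVec_mk]
  simp [Set.mem_singleton_iff, h.symm]

lemma cutVec_single_right {x y : V} (h : x ≠ y) : cutVec ({y} : Set V) s(x,y) = 1 := by
  rw [cutVec_mk]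
  simp [Set.mem_singleton_iff, h]

lemma cutVec_single_none {x y z : V} (h1 : x ≠ z) (h2 : y ≠ z) :
    cutVec ({z} : Set V) s(x,y) = 0 := by
  rw [cutVec_mk]
  simp [Set.mem_singleton_iff, h1, h2]

/-- No element of `int(M_G)` has last coordinate `≤ 3`, given a triangle. -/
lemma cutInterior_snd_ge {G : SimpleGraph V} {a b c : V}
    (hab : G.Adj a b) (hbc : G.Adj b c) (hac : G.Adj a c)
    {p : (G.edgeSet → ℤ) × ℤ} (hp : p ∈ cutInterior G) : ¬ p.2 ≤ 3 := by
  obtain ⟨hpM, hpI⟩ := hp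
  set E1 : G.edgeSet := ⟨s(a,b), hab⟩ with hE1
  set E2 : G.edgeSet := ⟨s(b,c), hbc⟩ with hE2
  set E3 : G.edgeSet := ⟨s(a,c), hac⟩ with hE3
  have hval : ∀ (A : Set V) (c1 c2 c3 d : ℝ),
      triL G c1 c2 c3 d E1 E2 E3 (genR G A)
        = c1 * ((cutVec A s(a,b) : ℤ) : ℝ) + c2 * ((cutVec A s(b,c) : ℤ) : ℝ)
          + c3 * ((cutVec A s(a,c) : ℤ) : ℝ) + d := by
    intro A c1 c2 c3 d
    rw [triL_apply]
    simp [genR, hE1, hE2, hE3]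
  have hgen : ∀ (c1 c2 c3 d : ℝ),
      (∀ t1 t2 t3 : ℤ, ((t1 = 0 ∧ t2 = 0 ∧ t3 = 0) ∨ (t1 = 1 ∧ t2 = 0 ∧ t3 = 1) ∨
        (t1 = 1 ∧ t2 = 1 ∧ t3 = 0) ∨ (t1 = 0 ∧ t2 = 1 ∧ t3 = 1)) →
        0 ≤ c1 * (t1 : ℝ) + c2 * (t2 : ℝ) + c3 * (t3 : ℝ) + d) →
      ∀ A : Set V, 0 ≤ triL G c1 c2 c3 d E1 E2 E3 (genR G A) := by
    intro c1 c2 c3 d hcases A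
    rw [hval]
    exact hcases _ _ _ (cutVec_triangle A a b c)
  have hstrict : ∀ (c1 c2 c3 d : ℝ),
      (∀ t1 t2 t3 : ℤ, ((t1 = 0 ∧ t2 = 0 ∧ t3 = 0) ∨ (t1 = 1 ∧ t2 = 0 ∧ t3 = 1) ∨
        (t1 = 1 ∧ t2 = 1 ∧ t3 = 0) ∨ (t1 = 0 ∧ t2 = 1 ∧ t3 = 1)) →
        0 ≤ c1 * (t1 : ℝ) + c2 * (t2 : ℝ) + c3 * (t3 : ℝ) + d) →
      ∀ A₀ : Set V, 0 < triL G c1 c2 c3 d E1 E2 E3 (genR G A₀) →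
      0 < c1 * ((p.1 E1 : ℤ) : ℝ) + c2 * ((p.1 E2 : ℤ) : ℝ) + c3 * ((p.1 E3 : ℤ) : ℝ)
          + d * ((p.2 : ℤ) : ℝ) := by
    intro c1 c2 c3 d hcases A₀ hpos
    have := interior_pos (triL G c1 c2 c3 d E1 E2 E3) (hgen c1 c2 c3 d hcases)
      (genR G A₀) hpos hpI
    rwa [triL_apply] at this
  have hne : a ≠ b := hab.ne
  have hne2 : b ≠ c := hbc.ne
  have hne3 : a ≠ c := hac.ne
  -- the strict inequalities
  have h1 : 0 < p.1 E1 := by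
    have := hstrict 1 0 0 0 (by
      rintro t1 t2 t3 (⟨h,h',h''⟩|⟨h,h',h''⟩|⟨h,h',h''⟩|⟨h,h',h''⟩) <;>
        rw [h, h', h''] <;> norm_num) ({a} : Set V) (by
      rw [hval, cutVec_single_left hne]
      norm_num)
    have h' : (0:ℝ) < ((p.1 E1 : ℤ) : ℝ) := by linarith
    exact_mod_cast h'
  have h2 : 0 < p.1 E2 := by
    have := hstrict 0 1 0 0 (by
      rintro t1 t2 t3 (⟨h,h',h''⟩|⟨h,h',h''⟩|⟨h,h',h''⟩|⟨h,h',h''⟩) <;>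
        rw [h, h', h''] <;> norm_num) ({b} : Set V) (by
      rw [hval, cutVec_single_left hne2]
      norm_num)
    have h' : (0:ℝ) < ((p.1 E2 : ℤ) : ℝ) := by linarith
    exact_mod_cast h'
  have h3 : 0 < p.1 E3 := by
    have := hstrict 0 0 1 0 (by
      rintro t1 t2 t3 (⟨h,h',h''⟩|⟨h,h',h''⟩|⟨h,h',h''⟩|⟨h,h',h''⟩) <;>
        rw [h, h', h''] <;> norm_num) ({a} : Set V) (by
      rw [hval, cutVec_single_left hne3]
      norm_num)
    have h' : (0:ℝ) < ((p.1 E3 : ℤ) : ℝ) := by linarith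
    exact_mod_cast h'
  have hT : p.1 E1 + p.1 E2 + p.1 E3 < 2 * p.2 := by
    have := hstrict (-1) (-1) (-1) 2 (by
      rintro t1 t2 t3 (⟨h,h',h''⟩|⟨h,h',h''⟩|⟨h,h',h''⟩|⟨h,h',h''⟩) <;>
        rw [h, h', h''] <;> norm_num) (∅ : Set V) (by
      rw [hval, cutVec_empty, cutVec_empty, cutVec_empty]
      norm_num)
    have h' : ((p.1 E1 : ℤ) : ℝ) + ((p.1 E2 : ℤ) : ℝ) + ((p.1 E3 : ℤ) : ℝ)
        < 2 * ((p.2 : ℤ) : ℝ) := by linarith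
    exact_mod_cast h'
  have hA : p.1 E1 < p.1 E2 + p.1 E3 := by
    have := hstrict (-1) 1 1 0 (by
      rintro t1 t2 t3 (⟨h,h',h''⟩|⟨h,h',h''⟩|⟨h,h',h''⟩|⟨h,h',h''⟩) <;>
        rw [h, h', h''] <;> norm_num) ({c} : Set V) (by
      rw [hval, cutVec_single_none hne3 hne2, cutVec_single_right hne2,
        cutVec_single_right hne3]
      norm_num)
    have h' : ((p.1 E1 : ℤ) : ℝ) < ((p.1 E2 : ℤ) : ℝ) + ((p.1 E3 : ℤ) : ℝ) := by linarith
    exact_mod_cast h'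
  have hB : p.1 E2 < p.1 E1 + p.1 E3 := by
    have := hstrict 1 (-1) 1 0 (by
      rintro t1 t2 t3 (⟨h,h',h''⟩|⟨h,h',h''⟩|⟨h,h',h''⟩|⟨h,h',h''⟩) <;>
        rw [h, h', h''] <;> norm_num) ({a} : Set V) (by
      rw [hval, cutVec_single_left hne, cutVec_single_none (Ne.symm hne) (Ne.symm hne3),
        cutVec_single_left hne3]
      norm_num)
    have h' : ((p.1 E2 : ℤ) : ℝ) < ((p.1 E1 : ℤ) : ℝ) + ((p.1 E3 : ℤ) : ℝ) := by linarith
    exact_mod_cast h'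
  have hC : p.1 E3 < p.1 E1 + p.1 E2 := by
    have := hstrict 1 1 (-1) 0 (by
      rintro t1 t2 t3 (⟨h,h',h''⟩|⟨h,h',h''⟩|⟨h,h',h''⟩|⟨h,h',h''⟩) <;>
        rw [h, h', h''] <;> norm_num) ({b} : Set V) (by
      rw [hval, cutVec_single_right hne, cutVec_single_left hne2,
        cutVec_single_none hne (Ne.symm hne2)]
      norm_num)
    have h' : ((p.1 E3 : ℤ) : ℝ) < ((p.1 E1 : ℤ) : ℝ) + ((p.1 E2 : ℤ) : ℝ) := by linarith
    exact_mod_cast h'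
  have heven : Even (p.1 E1 + p.1 E2 + p.1 E3) := cutMonoid_tri_even hab hbc hac hpM
  obtain ⟨t, ht⟩ := heven
  intro hle
  omega

end bullet2

/-- For a `K₅`-minor-free bridgeless chordal graph with at least one
edge whose cut monoid is normal, `(2,…,2,4)` lies in `int(M_G)`, no element of
`int(M_G)` has last coordinate `≤ 3`, and if `int(M_G) = y + M_G` for some
`y ∈ int(M_G)` then `int(M_G) = (2,…,2,4) + M_G`. -/
theorem chordal_gorenstein_generator {V : Type} [Fintype V] (G : SimpleGraph V)
    (hK5 : K5Free G) (hbl : BridgelessG G) (hch : ChordalG G)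
    (hedge : G.edgeSet.Nonempty) (hnorm : CutNormal G) :
    (((fun _ => 2, 4) : (G.edgeSet → ℤ) × ℤ) ∈ cutInterior G) ∧
    (∀ p ∈ cutInterior G, ¬ p.2 ≤ 3) ∧
    ∀ y ∈ cutInterior G,
      cutInterior G = (fun m => y + m) '' (cutMonoid G : Set ((G.edgeSet → ℤ) × ℤ)) →
      cutInterior G =
        (fun m => ((fun _ => 2, 4) : (G.edgeSet → ℤ) × ℤ) + m) ''
          (cutMonoid G : Set ((G.edgeSet → ℤ) × ℤ)) := by
  classical
  obtain ⟨q, hq⟩ := hedge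
  obtain ⟨v0, c0, hc0, _⟩ := hbl q hq
  obtain ⟨a, b, c, hab, hbc, hac⟩ := exists_triangle ⟨v0, c0, hc0⟩ hch
  have hbul1 : (((fun _ => 2, 4) : (G.edgeSet → ℤ) × ℤ)) ∈ cutInterior G :=
    ⟨xhat_mem_monoid G ⟨q, hq⟩ hnorm, phat_mem_interior G ⟨q, hq⟩⟩
  have hbul2 : ∀ p ∈ cutInterior G, ¬ p.2 ≤ 3 :=
    fun p hp => cutInterior_snd_ge hab hbc hac hp
  refine ⟨hbul1, hbul2, ?_⟩
  intro y hy heq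
  have hx : (((fun _ => 2, 4) : (G.edgeSet → ℤ) × ℤ))
      ∈ (fun m => y + m) '' (cutMonoid G : Set ((G.edgeSet → ℤ) × ℤ)) := by
    rw [← heq]; exact hbul1
  obtain ⟨m, hm, hxeq⟩ := hx
  have hy4 : ¬ y.2 ≤ 3 := hbul2 y hy
  have hm2 := cutMonoid_snd hm
  have hsnd : y.2 + m.2 = 4 := by
    have := congrArg Prod.snd hxeq
    simpa using this
  have hm0 : m = 0 := hm2.2 (by omega)
  have hyx : y = (((fun _ => 2, 4) : (G.edgeSet → ℤ) × ℤ)) := by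
    rw [← hxeq, hm0]
    show y = y + 0
    rw [add_zero]
  rw [← hyx]
  exact heq
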